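/- The map $\sigma \mapsto \mathrm{Sw}(\sigma)$ relabeling each non-root internal vertex of the sign tree $S(\sigma)$ by the binary string recording in which coordinates its sign sequence differs from its parent's, is a bijection between $d$-separable permutations of size $n$ and rooted plane trees with $n$ leaves in which every internal vertex has at least two children, the root is labeled by a sign sequence in $\{\pm1\}^{d-1}$, and every other internal vertex is labeled by a swap sequence, i.e., a nonzero element of $\{0,1\}^{d-1}$. -/

import Mathlib

/-- The block sum `σ₁ ⊕ₛ σ₂` with sign sequence `s : Fin d → Bool` (`true` = `+1`). -/
def blockSum {d n₁ n₂ : ℕ} (σ₁ : Fin n₁ → Fin d → Fin n₁) (σ₂ : Fin n₂ → Fin d → Fin n₂)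
    (s : Fin d → Bool) : Fin (n₁ + n₂) → Fin d → Fin (n₁ + n₂) :=
  fun i j => Fin.addCases
    (fun i₁ => if s j then Fin.castAdd n₂ (σ₁ i₁ j) else Fin.addNat (σ₁ i₁ j) n₂)
    (fun i₂ => if s j then Fin.natAdd n₁ (σ₂ i₂ j)
      else Fin.castLE (Nat.le_add_left n₂ n₁) (σ₂ i₂ j)) i

/-- `(d+1)`-separable permutations. -/
inductive IsSep (d : ℕ) : (n : ℕ) → (Fin n → Fin d → Fin n) → Prop
  | single (σ : Fin 1 → Fin d → Fin 1) : IsSep d 1 σ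
  | sum {n₁ n₂ : ℕ} (σ₁ : Fin n₁ → Fin d → Fin n₁) (σ₂ : Fin n₂ → Fin d → Fin n₂)
      (s : Fin d → Bool) : IsSep d n₁ σ₁ → IsSep d n₂ σ₂ →
      IsSep d (n₁ + n₂) (blockSum σ₁ σ₂ s)

/-- Sign trees: internal vertices labeled by sign sequences. -/
inductive SignTree (d : ℕ) : Type
  | leaf : SignTree d
  | node : (Fin d → Bool) → List (SignTree d) → SignTree d

mutual
  def treePerm {d : ℕ} : SignTree d → (n : ℕ) × (Fin n → Fin d → Fin n)
    | .leaf => ⟨1, fun _ _ => 0⟩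
    | .node s ts => treePermList s ts
  def treePermList {d : ℕ} (s : Fin d → Bool) :
      List (SignTree d) → (n : ℕ) × (Fin n → Fin d → Fin n)
    | [] => ⟨0, fun i _ => i⟩
    | t :: ts => ⟨(treePerm t).1 + (treePermList s ts).1,
        blockSum (treePerm t).2 (treePermList s ts).2 s⟩
end

/-- Swap trees: the root carries a sign sequence in `{±1}^d`; every other internal vertex
carries a binary string of length `d` (its swap sequence, required nonzero by validity)
recording in which coordinates its sign sequence differs from its parent's. -/
inductive SwapTree (d : ℕ) : Type
  | leaf : SwapTree d
  | node : (Fin d → Bool) → List (SwapTree d) → SwapTree d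

mutual
  /-- Recover the sign tree below a vertex whose parent carries sign sequence `par`, by
  flipping the coordinates indicated by each swap sequence. -/
  def toSign {d : ℕ} (par : Fin d → Bool) : SwapTree d → SignTree d
    | .leaf => .leaf
    | .node sw ts => .node (fun j => xor (par j) (sw j))
        (toSignList (fun j => xor (par j) (sw j)) ts)
  def toSignList {d : ℕ} (par : Fin d → Bool) : List (SwapTree d) → List (SignTree d)
    | [] => []
    | t :: ts => toSign par t :: toSignList par ts
end

/-- The sign tree encoded by a swap tree: the root label is itself a sign sequence, and
the labels of the other internal vertices are recovered from the swap sequences by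
exploring from the root down. -/
def swapToSign {d : ℕ} : SwapTree d → SignTree d
  | .leaf => .leaf
  | .node s ts => .node s (toSignList s ts)

mutual
  def numLeavesSw {d : ℕ} : SwapTree d → ℕ
    | .leaf => 1
    | .node _ ts => numLeavesSwList ts
  def numLeavesSwList {d : ℕ} : List (SwapTree d) → ℕ
    | [] => 0
    | t :: ts => numLeavesSw t + numLeavesSwList ts
end

mutual
  /-- Validity of a non-root subtree of a swap tree: internal vertices have at least two
  children and a nonzero swap sequence. -/
  def ValidSwapAux {d : ℕ} : SwapTree d → Prop
    | .leaf => True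
    | .node sw ts => 2 ≤ ts.length ∧ (∃ j, sw j = true) ∧ ValidSwapAuxList ts
  def ValidSwapAuxList {d : ℕ} : List (SwapTree d) → Prop
    | [] => True
    | t :: ts => ValidSwapAux t ∧ ValidSwapAuxList ts
end

/-- Validity of a swap tree: the root (labeled by an arbitrary sign sequence) has at
least two children if internal, and all other internal vertices carry nonzero swap
sequences and have at least two children. -/
def ValidSwap {d : ℕ} : SwapTree d → Prop
  | .leaf => True
  | .node _ ts => 2 ≤ ts.length ∧ ValidSwapAuxList ts


namespace SwapBij

abbrev SP (d : ℕ) := (m : ℕ) × (Fin m → Fin d → Fin m)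

def bsP {d : ℕ} (P Q : SP d) (s : Fin d → Bool) : SP d :=
  ⟨P.1 + Q.1, blockSum P.2 Q.2 s⟩

/-- natural-number value access -/
def vA {d : ℕ} (P : SP d) (i : ℕ) (j : Fin d) : ℕ :=
  if h : i < P.1 then (P.2 ⟨i, h⟩ j : ℕ) else 0

lemma vA_lt {d : ℕ} (P : SP d) {i : ℕ} (h : i < P.1) (j : Fin d) : vA P i j < P.1 := by
  simp only [vA, dif_pos h]; exact (P.2 ⟨i, h⟩ j).isLt

lemma vA_ge {d : ℕ} (P : SP d) {i : ℕ} (h : P.1 ≤ i) (j : Fin d) : vA P i j = 0 := by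
  simp only [vA, dif_neg (not_lt.mpr h)]

lemma permExt {d : ℕ} {P Q : SP d} (h1 : P.1 = Q.1)
    (h2 : ∀ i j, vA P i j = vA Q i j) : P = Q := by
  obtain ⟨n, f⟩ := P; obtain ⟨m, g⟩ := Q
  dsimp at h1; subst h1
  simp only [Sigma.mk.inj_iff, heq_eq_eq, true_and]
  funext i j
  have := h2 i j
  simp only [vA, dif_pos i.isLt] at this
  exact Fin.ext (by simpa using this)

lemma vA_bs {d : ℕ} (P Q : SP d) (s : Fin d → Bool) (i : ℕ) (j : Fin d) :
    vA (bsP P Q s) i j =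
      if i < P.1 then (if s j then vA P i j else vA P i j + Q.1)
      else if i < P.1 + Q.1 then
        (if s j then P.1 + vA Q (i - P.1) j else vA Q (i - P.1) j)
      else 0 := by
  rcases lt_or_ge i P.1 with h | h
  · have hn : i < P.1 + Q.1 := by omega
    have hi : (⟨i, hn⟩ : Fin (P.1 + Q.1)) = Fin.castAdd Q.1 ⟨i, h⟩ := rfl
    simp only [vA, bsP, dif_pos hn, dif_pos h, if_pos h, hi, blockSum, Fin.addCases_left]
    cases s j <;> simp
  · rw [if_neg (by omega)]
    rcases lt_or_ge i (P.1 + Q.1) with h2 | h2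
    · have hq : i - P.1 < Q.1 := by omega
      have hi : (⟨i, h2⟩ : Fin (P.1 + Q.1)) = Fin.natAdd P.1 ⟨i - P.1, hq⟩ :=
        Fin.ext (by simp; omega)
      simp only [vA, bsP, dif_pos h2, dif_pos hq, if_pos h2, hi, blockSum,
        Fin.addCases_right]
      cases s j <;> simp
    · simp only [vA, bsP, dif_neg (not_lt.mpr h2), if_neg (not_lt.mpr h2)]
      exact dif_neg (not_lt.mpr h2)

end SwapBij


namespace SwapBij

/-- `P` splits at position `a` with sign sequence `s`. -/
def SplitsP {d : ℕ} (P : SP d) (s : Fin d → Bool) (a : ℕ) : Prop :=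
  ∀ j : Fin d, ∀ i < P.1,
    if s j then (i < a ↔ vA P i j < a) else (i < a ↔ P.1 - a ≤ vA P i j)

lemma not_two_splits {d : ℕ} {P : SP d} {s s' : Fin d → Bool} {a b : ℕ} {j : Fin d}
    (h : SplitsP P s a) (h' : SplitsP P s' b) (ha : 0 < a) (han : a < P.1)
    (hb : 0 < b) (hbn : b < P.1) (hj : s j ≠ s' j) : False := by
  have hP : 0 < P.1 := by omega
  have H0 := h j 0 hP
  have H1 := h' j 0 hP
  have H2 := h j (P.1 - 1) (by omega)
  have H3 := h' j (P.1 - 1) (by omega)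
  have B0 := vA_lt P hP j
  have B1 := vA_lt P (show P.1 - 1 < P.1 by omega) j
  cases hs : s j <;> cases hs' : s' j <;>
    simp [hs, hs'] at H0 H1 H2 H3 hj <;> omega

lemma splitsP_bs {d : ℕ} (P Q : SP d) (s : Fin d → Bool) :
    SplitsP (bsP P Q s) s P.1 := by
  intro j i hi
  have hbs : (bsP P Q s).1 = P.1 + Q.1 := rfl
  have hi' : i < P.1 + Q.1 := by omega
  rw [vA_bs]
  rcases lt_or_ge i P.1 with h | h
  · have := vA_lt P h j
    simp only [if_pos h]
    cases s j <;> simp <;> omega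
  · have hq : i - P.1 < Q.1 := by
      simpa [bsP] using Nat.sub_lt_left_of_lt_add h hi'
    have := vA_lt Q hq j
    simp only [if_neg (not_lt.mpr h), if_pos hi']
    cases s j <;> simp <;> omega

lemma splitsP_bs_left {d : ℕ} {P Q : SP d} {s : Fin d → Bool} {k : ℕ}
    (h : SplitsP (bsP P Q s) s k) (hk : k ≤ P.1) : SplitsP P s k := by
  intro j i hi
  have hbs : (bsP P Q s).1 = P.1 + Q.1 := rfl
  have H := h j i (by omega)
  rw [vA_bs, if_pos hi] at H
  have := vA_lt P hi j
  cases hs : s j <;> simp [hs] at H ⊢ <;> omega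

end SwapBij


namespace SwapBij

lemma treePermList_cons {d : ℕ} (s : Fin d → Bool) (t : SignTree d) (ts : List (SignTree d)) :
    treePermList s (t :: ts) = bsP (treePerm t) (treePermList s ts) s := rfl

lemma vA_cases {d : ℕ} (Q : SP d) (k : ℕ) (j : Fin d) :
    (k < Q.1 ∧ vA Q k j < Q.1) ∨ (Q.1 ≤ k ∧ vA Q k j = 0) := by
  unfold vA; split
  · exact Or.inl ⟨by assumption, (Q.2 _ j).isLt⟩
  · exact Or.inr ⟨by omega, rfl⟩

lemma bsP_assoc {d : ℕ} (P Q R : SP d) (s : Fin d → Bool) :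
    bsP (bsP P Q s) R s = bsP P (bsP Q R s) s := by
  apply permExt (show P.1 + Q.1 + R.1 = P.1 + (Q.1 + R.1) by omega)
  intro i j
  have e1 : (bsP P Q s).1 = P.1 + Q.1 := rfl
  have e2 : (bsP Q R s).1 = Q.1 + R.1 := rfl
  have bP := vA_cases P i j
  have bQ := vA_cases Q (i - P.1) j
  have bR := vA_cases R (i - (P.1 + Q.1)) j
  simp only [vA_bs, e1, e2, Nat.sub_sub]
  split_ifs <;> omega

lemma bsP_zero_left {d : ℕ} (Q : SP d) (s : Fin d → Bool) :
    bsP ⟨0, fun i _ => i⟩ Q s = Q := by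
  apply permExt (show 0 + Q.1 = Q.1 by omega)
  intro i j
  have e1 : (bsP (⟨0, fun i _ => i⟩ : SP d) Q s).1 = 0 + Q.1 := rfl
  have bQ := vA_cases Q i j
  have bQ0 := vA_cases (⟨0, fun i _ => i⟩ : SP d) i j
  simp only [vA_bs, show ((⟨0, fun i _ => i⟩ : SP d)).1 = 0 from rfl, Nat.sub_zero]
  split_ifs <;> omega

lemma bsP_zero_right {d : ℕ} (P : SP d) (s : Fin d → Bool) :
    bsP P ⟨0, fun i _ => i⟩ s = P := by
  refine permExt ?_ ?_
  · show P.1 + 0 = P.1; omega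
  intro i j
  have bP := vA_cases P i j
  have bP0 := vA_cases (⟨0, fun i _ => i⟩ : SP d) (i - P.1) j
  simp only [vA_bs, show ((⟨0, fun i _ => i⟩ : SP d)).1 = 0 from rfl]
  split_ifs <;> omega

lemma treePermList_singleton {d : ℕ} (s : Fin d → Bool) (t : SignTree d) :
    treePermList s [t] = treePerm t := by
  rw [treePermList_cons]
  exact bsP_zero_right _ _

lemma treePermList_append {d : ℕ} (s : Fin d → Bool) (l₁ l₂ : List (SignTree d)) :
    treePermList s (l₁ ++ l₂) = bsP (treePermList s l₁) (treePermList s l₂) s := by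
  induction l₁ with
  | nil => simpa [treePermList] using (bsP_zero_left (treePermList s l₂) s).symm
  | cons t ts ih =>
      rw [List.cons_append, treePermList_cons, ih, treePermList_cons, bsP_assoc]

/-- A sign tree's label differs from `s` (vacuous for leaves). -/
def SignNe {d : ℕ} (s : Fin d → Bool) : SignTree d → Prop
  | .leaf => True
  | .node s' _ => s' ≠ s

mutual
  /-- Canonical sign trees. -/
  def Canon {d : ℕ} : SignTree d → Prop
    | .leaf => True
    | .node s ts => 2 ≤ ts.length ∧ CanonList s ts
  def CanonList {d : ℕ} (s : Fin d → Bool) : List (SignTree d) → Prop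
    | [] => True
    | t :: ts => Canon t ∧ SignNe s t ∧ CanonList s ts
end

mutual
  lemma canon_pos {d : ℕ} : ∀ t : SignTree d, Canon t → 1 ≤ (treePerm t).1
    | .leaf, _ => le_refl 1
    | .node s ts, h => by
        have h2 : 2 ≤ ts.length := h.1
        have := canonList_pos s ts h.2
        show 1 ≤ (treePermList s ts).1
        omega
  lemma canonList_pos {d : ℕ} (s : Fin d → Bool) :
      ∀ ts : List (SignTree d), CanonList s ts → ts.length ≤ (treePermList s ts).1
    | [], _ => le_refl 0
    | t :: ts, h => by
        have h1 := canon_pos t h.1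
        have h2 := canonList_pos s ts h.2.2
        show ts.length + 1 ≤ (treePerm t).1 + (treePermList s ts).1
        omega
end

end SwapBij


namespace SwapBij

def Indec {d : ℕ} (P : SP d) (s : Fin d → Bool) : Prop :=
  ∀ k, 0 < k → k < P.1 → ¬ SplitsP P s k

lemma splits_of_canonList {d : ℕ} {s : Fin d → Bool} {l : List (SignTree d)}
    (hc : CanonList s l) (hl : 2 ≤ l.length) :
    ∃ a, 0 < a ∧ a < (treePermList s l).1 ∧ SplitsP (treePermList s l) s a := by
  match l, hc, hl with
  | t :: ts, hc, hl =>
    refine ⟨(treePerm t).1, canon_pos t hc.1, ?_, ?_⟩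
    · have h1 := canonList_pos s ts hc.2.2
      have h2 : 1 ≤ ts.length := by simpa using Nat.le_of_succ_le_succ hl
      show (treePerm t).1 < (treePerm t).1 + (treePermList s ts).1
      omega
    · rw [treePermList_cons]
      exact splitsP_bs _ _ _

lemma indec_child {d : ℕ} {s : Fin d → Bool} {t : SignTree d}
    (hc : Canon t) (hne : SignNe s t) : Indec (treePerm t) s := by
  intro k hk hk' hsp
  match t, hc, hne with
  | .leaf, _, _ =>
    have : (treePerm (SignTree.leaf : SignTree d)).1 = 1 := rfl
    omega
  | .node s' l, hc, hne =>
    have hne' : s' ≠ s := hne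
    have hj : ∃ j, s j ≠ s' j := by
      by_contra h'
      push_neg at h'
      exact hne' (funext fun j => (h' j).symm)
    obtain ⟨j, hj⟩ := hj
    obtain ⟨a, ha0, han, hsa⟩ := splits_of_canonList hc.2 hc.1
    have he : treePerm (SignTree.node s' l) = treePermList s' l := rfl
    rw [he] at hsp hk'
    exact not_two_splits hsp hsa hk hk' ha0 han hj

lemma bsP_inj {d : ℕ} {P Q P' Q' : SP d} {s : Fin d → Bool}
    (h : bsP P Q s = bsP P' Q' s) (h2 : P.1 = P'.1) : P = P' ∧ Q = Q' := by
  have h1 : P.1 + Q.1 = P'.1 + Q'.1 := congrArg Sigma.fst h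
  have hv : ∀ i j, vA (bsP P Q s) i j = vA (bsP P' Q' s) i j := by
    rw [h]; intro _ _; rfl
  have e : P'.1 = P.1 := h2.symm
  constructor
  · refine permExt h2 ?_
    intro i j
    have hvi := hv i j
    rw [vA_bs, vA_bs, e] at hvi
    have c1 := vA_cases P i j
    have c2 := vA_cases P' i j
    split_ifs at hvi <;> omega
  · refine permExt (by omega) ?_
    intro i j
    have hvi := hv (P.1 + i) j
    rw [vA_bs, vA_bs, e, Nat.add_sub_cancel_left] at hvi
    have c1 := vA_cases Q i j
    have c2 := vA_cases Q' i j
    split_ifs at hvi <;> omega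

lemma no_lt {d : ℕ} (t t' : SignTree d) (s : Fin d → Bool) (ts ts' : List (SignTree d))
    (hc : Canon t) (hc' : Canon t') (hne' : SignNe s t')
    (h : bsP (treePerm t) (treePermList s ts) s
       = bsP (treePerm t') (treePermList s ts') s) :
    ¬ ((treePerm t).1 < (treePerm t').1) := by
  intro hlt
  have htot : (treePerm t).1 + (treePermList s ts).1
      = (treePerm t').1 + (treePermList s ts').1 := congrArg Sigma.fst h
  match ts with
  | [] =>
    have h0 : (treePermList s ([] : List (SignTree d))).1 = 0 := rfl
    omega
  | u :: us =>
    have hs1 : SplitsP (bsP (treePerm t) (treePermList s (u :: us)) s) s (treePerm t).1 :=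
      splitsP_bs _ _ _
    rw [h] at hs1
    have hsp := splitsP_bs_left hs1 (le_of_lt hlt)
    exact indec_child hc' hne' (treePerm t).1 (canon_pos t hc) hlt hsp

mutual
  lemma canonInj {d : ℕ} : ∀ t₁ t₂ : SignTree d, Canon t₁ → Canon t₂ →
      treePerm t₁ = treePerm t₂ → t₁ = t₂
    | .leaf, .leaf, _, _, _ => rfl
    | .leaf, .node s l, _, h2, h => by
        have h1 : (1 : ℕ) = (treePermList s l).1 := congrArg Sigma.fst h
        have := canonList_pos s l h2.2
        have := h2.1
        omega
    | .node s l, .leaf, h1, _, h => by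
        have hh : (treePermList s l).1 = (1 : ℕ) := congrArg Sigma.fst h
        have := canonList_pos s l h1.2
        have := h1.1
        omega
    | .node s₁ l₁, .node s₂ l₂, h1, h2, h => by
        have hh : treePermList s₁ l₁ = treePermList s₂ l₂ := h
        have hs : s₁ = s₂ := by
          by_contra hne
          have hj : ∃ j, s₁ j ≠ s₂ j := by
            by_contra h'
            push_neg at h'
            exact hne (funext h')
          obtain ⟨j, hj⟩ := hj
          obtain ⟨a, ha0, han, hsa⟩ := splits_of_canonList h1.2 h1.1
          obtain ⟨b, hb0, hbn, hsb⟩ := splits_of_canonList h2.2 h2.1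
          rw [← hh] at hsb hbn
          exact not_two_splits hsa hsb ha0 han hb0 hbn hj
        subst hs
        exact congrArg (SignTree.node s₁) (canonInjList s₁ l₁ l₂ h1.2 h2.2 hh)
  lemma canonInjList {d : ℕ} (s : Fin d → Bool) :
      ∀ l₁ l₂ : List (SignTree d), CanonList s l₁ → CanonList s l₂ →
      treePermList s l₁ = treePermList s l₂ → l₁ = l₂
    | [], [], _, _, _ => rfl
    | [], t :: ts, _, h2, h => by
        have h0 : (0 : ℕ) = (treePermList s (t :: ts)).1 := congrArg Sigma.fst h
        have h1 : (treePermList s (t :: ts)).1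
            = (treePerm t).1 + (treePermList s ts).1 := rfl
        have := canon_pos t h2.1
        omega
    | t :: ts, [], h1, _, h => by
        have h0 : (treePermList s (t :: ts)).1 = (0 : ℕ) := congrArg Sigma.fst h
        have hx : (treePermList s (t :: ts)).1
            = (treePerm t).1 + (treePermList s ts).1 := rfl
        have := canon_pos t h1.1
        omega
    | t :: ts, t' :: ts', h1, h2, h => by
        rw [treePermList_cons, treePermList_cons] at h
        have e1 := no_lt t t' s ts ts' h1.1 h2.1 h2.2.1 h
        have e2 := no_lt t' t s ts' ts h2.1 h1.1 h1.2.1 h.symm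
        obtain ⟨hP, hR⟩ := bsP_inj h (by omega)
        have ht := canonInj t t' h1.1 h2.1 hP
        have hts := canonInjList s ts ts' h1.2.2 h2.2.2 hR
        rw [ht, hts]
end

end SwapBij


namespace SwapBij

/- ### swap ↔ sign tree conversions -/

mutual
  def signToSwap {d : ℕ} (par : Fin d → Bool) : SignTree d → SwapTree d
    | .leaf => .leaf
    | .node s' ts => .node (fun j => xor (par j) (s' j)) (signToSwapList s' ts)
  def signToSwapList {d : ℕ} (par : Fin d → Bool) : List (SignTree d) → List (SwapTree d)
    | [] => []
    | t :: ts => signToSwap par t :: signToSwapList par ts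
end

def signToSwapRoot {d : ℕ} : SignTree d → SwapTree d
  | .leaf => .leaf
  | .node s ts => .node s (signToSwapList s ts)

mutual
  lemma toSign_signToSwap {d : ℕ} :
      ∀ (t : SignTree d) (par : Fin d → Bool), toSign par (signToSwap par t) = t
    | .leaf, _ => rfl
    | .node s' ts, par => by
        show SignTree.node (fun j => xor (par j) (xor (par j) (s' j)))
            (toSignList (fun j => xor (par j) (xor (par j) (s' j))) (signToSwapList s' ts)) = _
        have hL : (fun j => xor (par j) (xor (par j) (s' j))) = s' :=
          funext fun j => by cases par j <;> cases s' j <;> rfl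
        rw [hL]
        exact congrArg _ (toSignList_signToSwapList ts s')
  lemma toSignList_signToSwapList {d : ℕ} :
      ∀ (ts : List (SignTree d)) (par : Fin d → Bool),
        toSignList par (signToSwapList par ts) = ts
    | [], _ => rfl
    | t :: ts, par => by
        show toSign par (signToSwap par t) :: toSignList par (signToSwapList par ts) = _
        rw [toSign_signToSwap t par, toSignList_signToSwapList ts par]
end

lemma swapToSign_signToSwapRoot {d : ℕ} (S : SignTree d) :
    swapToSign (signToSwapRoot S) = S := by
  match S with
  | .leaf => rfl
  | .node s ts =>
      show SignTree.node s (toSignList s (signToSwapList s ts)) = _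
      rw [toSignList_signToSwapList ts s]

mutual
  lemma signToSwap_toSign {d : ℕ} :
      ∀ (t : SwapTree d) (par : Fin d → Bool), signToSwap par (toSign par t) = t
    | .leaf, _ => rfl
    | .node sw ts, par => by
        show SwapTree.node (fun j => xor (par j) (xor (par j) (sw j)))
            (signToSwapList (fun j => xor (par j) (sw j))
              (toSignList (fun j => xor (par j) (sw j)) ts)) = _
        have hL : (fun j => xor (par j) (xor (par j) (sw j))) = sw :=
          funext fun j => by cases par j <;> cases sw j <;> rfl
        rw [hL, signToSwapList_toSignList ts _]
  lemma signToSwapList_toSignList {d : ℕ} :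
      ∀ (ts : List (SwapTree d)) (par : Fin d → Bool),
        signToSwapList par (toSignList par ts) = ts
    | [], _ => rfl
    | t :: ts, par => by
        show signToSwap par (toSign par t) :: signToSwapList par (toSignList par ts) = _
        rw [signToSwap_toSign t par, signToSwapList_toSignList ts par]
end

lemma signToSwapRoot_swapToSign {d : ℕ} (T : SwapTree d) :
    signToSwapRoot (swapToSign T) = T := by
  match T with
  | .leaf => rfl
  | .node s ts =>
      show SwapTree.node s (signToSwapList s (toSignList s ts)) = _
      rw [signToSwapList_toSignList ts s]

/- ### lengths and leaves -/

lemma toSignList_length {d : ℕ} (par : Fin d → Bool) :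
    ∀ ts : List (SwapTree d), (toSignList par ts).length = ts.length
  | [] => rfl
  | t :: ts => congrArg Nat.succ (toSignList_length par ts)

lemma signToSwapList_length {d : ℕ} (par : Fin d → Bool) :
    ∀ ts : List (SignTree d), (signToSwapList par ts).length = ts.length
  | [] => rfl
  | t :: ts => congrArg Nat.succ (signToSwapList_length par ts)

mutual
  lemma numLeaves_toSign {d : ℕ} :
      ∀ (t : SwapTree d) (par : Fin d → Bool),
        numLeavesSw t = (treePerm (toSign par t)).1
    | .leaf, _ => rfl
    | .node sw ts, par => numLeavesList_toSign ts _
  lemma numLeavesList_toSign {d : ℕ} :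
      ∀ (ts : List (SwapTree d)) (par : Fin d → Bool),
        numLeavesSwList ts = (treePermList par (toSignList par ts)).1
    | [], _ => rfl
    | t :: ts, par => by
        show numLeavesSw t + numLeavesSwList ts
            = (treePerm (toSign par t)).1 + (treePermList par (toSignList par ts)).1
        rw [numLeaves_toSign t par, numLeavesList_toSign ts par]
end

lemma numLeaves_swapToSign {d : ℕ} (T : SwapTree d) :
    numLeavesSw T = (treePerm (swapToSign T)).1 := by
  match T with
  | .leaf => rfl
  | .node s ts => exact numLeavesList_toSign ts s

/- ### validity ↔ canonicity -/

mutual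
  lemma valid_canon {d : ℕ} :
      ∀ (t : SwapTree d) (par : Fin d → Bool), ValidSwapAux t →
        Canon (toSign par t) ∧ SignNe par (toSign par t)
    | .leaf, _, _ => ⟨trivial, trivial⟩
    | .node sw ts, par, h => by
        obtain ⟨hlen, ⟨j, hj⟩, hl⟩ := h
        refine ⟨⟨?_, validList_canon ts _ hl⟩, ?_⟩
        · rw [toSignList_length]; exact hlen
        · show (fun j => xor (par j) (sw j)) ≠ par
          intro he
          have := congrFun he j
          rw [hj] at this
          cases par j <;> simp at this
  lemma validList_canon {d : ℕ} :
      ∀ (ts : List (SwapTree d)) (par : Fin d → Bool), ValidSwapAuxList ts →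
        CanonList par (toSignList par ts)
    | [], _, _ => trivial
    | t :: ts, par, h =>
        ⟨(valid_canon t par h.1).1, (valid_canon t par h.1).2, validList_canon ts par h.2⟩
end

lemma valid_canon_root {d : ℕ} {T : SwapTree d} (h : ValidSwap T) :
    Canon (swapToSign T) := by
  match T, h with
  | .leaf, _ => trivial
  | .node s ts, h =>
      exact ⟨by rw [toSignList_length]; exact h.1, validList_canon ts s h.2⟩

mutual
  lemma canon_valid {d : ℕ} :
      ∀ (t : SignTree d) (par : Fin d → Bool), Canon t → SignNe par t →
        ValidSwapAux (signToSwap par t)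
    | .leaf, _, _, _ => trivial
    | .node s' ts, par, hc, hne => by
        have hne' : s' ≠ par := hne
        have hj : ∃ j, s' j ≠ par j := by
          by_contra h'
          push_neg at h'
          exact hne' (funext h')
        obtain ⟨j, hj⟩ := hj
        refine ⟨?_, ⟨j, ?_⟩, canonList_valid ts s' hc.2⟩
        · rw [signToSwapList_length]; exact hc.1
        · show xor (par j) (s' j) = true
          cases hp : par j <;> cases hs : s' j <;> simp_all
  lemma canonList_valid {d : ℕ} :
      ∀ (ts : List (SignTree d)) (par : Fin d → Bool), CanonList par ts →
        ValidSwapAuxList (signToSwapList par ts)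
    | [], _, _ => trivial
    | t :: ts, par, h =>
        ⟨canon_valid t par h.1 h.2.1, canonList_valid ts par h.2.2⟩
end

lemma canon_valid_root {d : ℕ} {S : SignTree d} (h : Canon S) :
    ValidSwap (signToSwapRoot S) := by
  match S, h with
  | .leaf, _ => trivial
  | .node s ts, h =>
      exact ⟨by rw [signToSwapList_length]; exact h.1, canonList_valid ts s h.2⟩

/- ### separability -/

lemma isSep_congr {d : ℕ} {P Q : SP d} (h : P = Q) (hs : IsSep d P.1 P.2) :
    IsSep d Q.1 Q.2 := h ▸ hs

mutual
  lemma canon_isSep {d : ℕ} : ∀ t : SignTree d, Canon t →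
      IsSep d (treePerm t).1 (treePerm t).2
    | .leaf, _ => IsSep.single _
    | .node s ts, h => canonList_isSep s ts h.2 (by
        intro he
        have := h.1
        rw [he] at this
        simp at this)
  lemma canonList_isSep {d : ℕ} : ∀ (s : Fin d → Bool) (ts : List (SignTree d)),
      CanonList s ts → ts ≠ [] → IsSep d (treePermList s ts).1 (treePermList s ts).2
    | s, [t], h, _ => isSep_congr (treePermList_singleton s t).symm (canon_isSep t h.1)
    | s, t :: u :: us, h, _ =>
        IsSep.sum _ _ s (canon_isSep t h.1)
          (canonList_isSep s (u :: us) h.2.2 (by simp))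
end

/- ### surjectivity -/

def extC {d : ℕ} (s : Fin d → Bool) : SignTree d → List (SignTree d)
  | .leaf => [.leaf]
  | .node s' ts => if s' = s then ts else [.node s' ts]

lemma treePermList_extC {d : ℕ} (s : Fin d → Bool) (t : SignTree d) :
    treePermList s (extC s t) = treePerm t := by
  match t with
  | .leaf => exact treePermList_singleton s _
  | .node s' ts =>
      rw [extC]
      split
      · next hss => subst hss; rfl
      · exact treePermList_singleton s _

lemma canonList_extC {d : ℕ} {s : Fin d → Bool} {t : SignTree d} (h : Canon t) :
    CanonList s (extC s t) := by
  match t, h with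
  | .leaf, _ => exact ⟨trivial, trivial, trivial⟩
  | .node s' ts, h =>
      rw [extC]
      split
      · next hss => subst hss; exact h.2
      · next hss => exact ⟨h, hss, trivial⟩

lemma extC_length {d : ℕ} {s : Fin d → Bool} {t : SignTree d} (h : Canon t) :
    1 ≤ (extC s t).length := by
  match t, h with
  | .leaf, _ => exact le_refl 1
  | .node s' ts, h =>
      rw [extC]
      split
      · have := h.1; omega
      · exact le_refl 1

lemma canonList_append {d : ℕ} {s : Fin d → Bool} {l₁ l₂ : List (SignTree d)}
    (h₁ : CanonList s l₁) (h₂ : CanonList s l₂) : CanonList s (l₁ ++ l₂) := by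
  induction l₁ with
  | nil => exact h₂
  | cons t ts ih => exact ⟨h₁.1, h₁.2.1, ih h₁.2.2⟩

lemma exists_canon {d n : ℕ} {σ : Fin n → Fin d → Fin n} (h : IsSep d n σ) :
    ∃ S : SignTree d, Canon S ∧ treePerm S = ⟨n, σ⟩ := by
  induction h with
  | single σ =>
      refine ⟨.leaf, trivial, ?_⟩
      show (⟨1, fun _ _ => 0⟩ : SP d) = ⟨1, σ⟩
      congr 1
      funext i j
      exact Subsingleton.elim _ _
  | sum σ₁ σ₂ s h1 h2 ih1 ih2 =>
      obtain ⟨S₁, hc1, he1⟩ := ih1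
      obtain ⟨S₂, hc2, he2⟩ := ih2
      refine ⟨.node s (extC s S₁ ++ extC s S₂), ⟨?_, ?_⟩, ?_⟩
      · rw [List.length_append]
        have := extC_length (s := s) hc1
        have := extC_length (s := s) hc2
        omega
      · exact canonList_append (canonList_extC hc1) (canonList_extC hc2)
      · show treePermList s (extC s S₁ ++ extC s S₂) = _
        rw [treePermList_append, treePermList_extC, treePermList_extC, he1, he2]
        rfl

end SwapBij

/-- The swap-tree encoding is a bijection: the map sending a swap tree to the
`(d+1)`-separable permutation of its associated sign tree is a bijection from swap trees
with `n` leaves onto `(d+1)`-separable permutations of size `n`. -/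
theorem swap_tree_bijection (d n : ℕ) :
    Set.BijOn (fun T => treePerm (swapToSign T))
      {T : SwapTree d | ValidSwap T ∧ numLeavesSw T = n}
      {p : (m : ℕ) × (Fin m → Fin d → Fin m) | p.1 = n ∧ IsSep d p.1 p.2} := by
  open SwapBij in
  refine ⟨?_, ?_, ?_⟩
  · rintro T ⟨hv, hn⟩
    refine ⟨?_, canon_isSep _ (valid_canon_root hv)⟩
    show (treePerm (swapToSign T)).1 = n
    rw [← numLeaves_swapToSign]; exact hn
  · rintro T₁ ⟨hv₁, -⟩ T₂ ⟨hv₂, -⟩ he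
    have h := canonInj _ _ (valid_canon_root hv₁) (valid_canon_root hv₂) he
    calc T₁ = signToSwapRoot (swapToSign T₁) := (signToSwapRoot_swapToSign T₁).symm
      _ = signToSwapRoot (swapToSign T₂) := by rw [h]
      _ = T₂ := signToSwapRoot_swapToSign T₂
  · rintro ⟨m, σ⟩ ⟨hm, hsep⟩
    dsimp at hm hsep
    subst hm
    obtain ⟨S, hc, he⟩ := exists_canon hsep
    refine ⟨signToSwapRoot S, ⟨canon_valid_root hc, ?_⟩, ?_⟩
    · rw [numLeaves_swapToSign, swapToSign_signToSwapRoot, he]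
    · show treePerm (swapToSign (signToSwapRoot S)) = _
      rw [swapToSign_signToSwapRoot, he]
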